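/- arXiv:2605.21400 — 3 statements merged into one kernel-verified Lean document; each statement's English description precedes it below -/
import Mathlib

section
/- Let i, D be nonnegative integers, A a positive integer, and k₀ an integer with Δ₀ = k₀·A − i·D < 0. Set q = ⌊|Δ₀|/A⌋, k₁ = k₀ + q, and Δ₁ = −(|Δ₀| mod A). Then Δ₁ = k₁·A − i·D, and: if |Δ₁ + A| < |Δ₁| then k₁ + 1 minimizes |k·A − i·D| over all integers k; otherwise k₁ minimizes |k·A − i·D| over all integers k. -/
lemma aux_min (A d : ℤ) (hA : 0 < A) (hd1 : -A < d) (hd2 : d ≤ 0) (t : ℤ) :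
    min |d + A| |d| ≤ |d + t * A| := by
  rcases le_or_gt t 0 with ht | ht
  · calc min |d + A| |d| ≤ |d| := min_le_right _ _
      _ = -d := abs_of_nonpos hd2
      _ ≤ -(d + t * A) := by nlinarith
      _ ≤ |d + t * A| := neg_le_abs _
  · have ht1 : 1 ≤ t := ht
    calc min |d + A| |d| ≤ |d + A| := min_le_left _ _
      _ = d + A := abs_of_nonneg (by linarith)
      _ ≤ d + t * A := by nlinarith
      _ ≤ |d + t * A| := le_abs_self _

theorem stmt_7 (i D A k₀ : ℤ) (hi : 0 ≤ i) (hD : 0 ≤ D) (hA : 0 < A)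
    (Δ₀ : ℤ) (hΔ₀ : Δ₀ = k₀ * A - i * D) (hneg : Δ₀ < 0)
    (q k₁ Δ₁ : ℤ) (hq : q = |Δ₀| / A) (hk₁ : k₁ = k₀ + q) (hΔ₁ : Δ₁ = -(|Δ₀| % A)) :
    Δ₁ = k₁ * A - i * D ∧
    (if |Δ₁ + A| < |Δ₁| then
        ∀ k : ℤ, |(k₁ + 1) * A - i * D| ≤ |k * A - i * D|
      else
        ∀ k : ℤ, |k₁ * A - i * D| ≤ |k * A - i * D|) := by
  have h1 : Δ₁ = k₁ * A - i * D := by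
    rw [hΔ₁, Int.emod_def, abs_of_neg hneg, hk₁, hq, abs_of_neg hneg, hΔ₀]; ring
  have hd2 : Δ₁ ≤ 0 := by
    rw [hΔ₁]
    simp [Int.emod_nonneg _ (ne_of_gt hA)]
  have hd1 : -A < Δ₁ := by
    rw [hΔ₁]
    have := Int.emod_lt_of_pos |Δ₀| hA
    linarith
  refine ⟨h1, ?_⟩
  have key : ∀ k : ℤ, min |Δ₁ + A| |Δ₁| ≤ |k * A - i * D| := by
    intro k
    have : k * A - i * D = Δ₁ + (k - k₁) * A := by rw [h1]; ring
    rw [this]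
    exact aux_min A Δ₁ hA hd1 hd2 (k - k₁)
  split_ifs with h
  · intro k
    have e : (k₁ + 1) * A - i * D = Δ₁ + A := by rw [h1]; ring
    rw [e]
    calc |Δ₁ + A| = min |Δ₁ + A| |Δ₁| := (min_eq_left h.le).symm
      _ ≤ _ := key k
  · intro k
    have e : k₁ * A - i * D = Δ₁ := h1.symm
    rw [e]
    calc |Δ₁| = min |Δ₁ + A| |Δ₁| := (min_eq_right (not_lt.mp h)).symm
      _ ≤ _ := key k
end

section
/- The residual Δ returned by the direct-search algorithm satisfies Δ = j·A − i·D and |Δ| ≤ A/2, where j is the returned integer. -/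
/-- Direct-search algorithm with correction term `Δm`. -/
def ds (i D A k₀ Δm : ℤ) : ℤ × ℤ :=
  let Δ₀ := k₀ * A - i * D + Δm
  if Δ₀ = 0 then (k₀, 0)
  else if 0 < Δ₀ then
    let k₁ := k₀ - Δ₀ / A
    let Δ₁ := Δ₀ % A
    if |Δ₁ - A| < |Δ₁| then (k₁ - 1, Δ₁ - A) else (k₁, Δ₁)
  else
    let k₁ := k₀ + |Δ₀| / A
    let Δ₁ := -(|Δ₀| % A)
    if |Δ₁ + A| < |Δ₁| then (k₁ + 1, Δ₁ + A) else (k₁, Δ₁)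

lemma key_bound (A x : ℤ) (h : 2 * |x| ≤ A) : |((x : ℤ) : ℚ)| ≤ (A : ℚ) / 2 := by
  have h' : ((2 * |x| : ℤ) : ℚ) ≤ ((A : ℤ) : ℚ) := Int.cast_le.mpr h
  push_cast at h'
  rw [le_div_iff₀ (by norm_num : (0:ℚ) < 2)]
  linarith

theorem stmt_9 (i D A k₀ : ℤ) (hi : 0 ≤ i) (hD : 0 ≤ D) (hA : 0 < A) :
    (ds i D A k₀ 0).2 = (ds i D A k₀ 0).1 * A - i * D ∧
    |((ds i D A k₀ 0).2 : ℚ)| ≤ (A : ℚ) / 2 := by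
  unfold ds
  set Δ₀ := k₀ * A - i * D + 0 with hΔ₀
  have hne : A ≠ 0 := hA.ne'
  by_cases h0 : Δ₀ = 0
  · rw [if_pos h0]
    constructor
    · simp only
      linarith [hΔ₀, h0]
    · simp only [Int.cast_zero, abs_zero]
      positivity
  · simp only [if_neg h0]
    by_cases hpos : 0 < Δ₀
    · simp only [if_pos hpos]
      have hmod : 0 ≤ Δ₀ % A := Int.emod_nonneg _ hne
      have hlt : Δ₀ % A < A := Int.emod_lt_of_pos _ hA
      have hdm : A * (Δ₀ / A) + Δ₀ % A = Δ₀ := Int.mul_ediv_add_emod _ _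
      by_cases hc : |Δ₀ % A - A| < |Δ₀ % A|
      · simp only [if_pos hc]
        refine ⟨by ring_nf; ring_nf at hdm ⊢; nlinarith, key_bound A _ ?_⟩
        rw [abs_of_neg (by omega), abs_of_nonneg hmod] at hc
        rw [abs_of_neg (by omega)]
        omega
      · simp only [if_neg hc]
        refine ⟨by nlinarith, key_bound A _ ?_⟩
        rw [abs_of_neg (by omega), abs_of_nonneg hmod, not_lt] at hc
        rw [abs_of_nonneg hmod]
        omega
    · simp only [if_neg hpos]
      have hneg : Δ₀ < 0 := by omega
      have habs : |Δ₀| = -Δ₀ := abs_of_neg hneg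
      have hmod : 0 ≤ |Δ₀| % A := Int.emod_nonneg _ hne
      have hlt : |Δ₀| % A < A := Int.emod_lt_of_pos _ hA
      have hdm : A * (|Δ₀| / A) + |Δ₀| % A = |Δ₀| := Int.mul_ediv_add_emod _ _
      by_cases hc : |-(|Δ₀| % A) + A| < |-(|Δ₀| % A)|
      · simp only [if_pos hc]
        refine ⟨by nlinarith, key_bound A _ ?_⟩
        rw [abs_of_nonneg (by omega), abs_neg, abs_of_nonneg hmod] at hc
        rw [abs_of_nonneg (by omega)]
        omega
      · simp only [if_neg hc]
        refine ⟨by nlinarith, key_bound A _ ?_⟩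
        rw [abs_of_nonneg (by omega), abs_neg, abs_of_nonneg hmod, not_lt] at hc
        rw [abs_neg, abs_of_nonneg hmod]
        omega
end

section
/- Additive decomposition into two subproblems: Let i₁, i₂, D be nonnegative integers and A a positive integer, and let i = i₁ + i₂. If j₁ minimizes |k·A − i₁·D| over integers k with residual Δ̃₁ = j₁·A − i₁·D, and j₂ is the output of the direct-search algorithm called with inputs (i₂, D, A, κ₂, Δ̃₁) (i.e., the residual of the first subproblem added as a correction term to Δ₀), then j = j₁ + j₂ minimizes |k·A − i·D| over all integers k, and the returned residual equals j·A − i·D. -/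
lemma key (A Δ x : ℤ) (hA : 0 < A) (h2 : 2 * |Δ| ≤ A) (hd : A ∣ (x - Δ)) :
    |Δ| ≤ |x| := by
  obtain ⟨m, hm⟩ := hd
  rcases eq_or_ne m 0 with h | h
  · rw [h, mul_zero] at hm
    have : x = Δ := by linarith
    simp [this]
  · have h1 : 1 ≤ |m| := Int.one_le_abs h
    have h3 : |x - Δ| = A * |m| := by rw [hm, abs_mul, abs_of_pos hA]
    have h4 : A ≤ |x - Δ| := by nlinarith
    have h5 : |x - Δ| ≤ |x| + |Δ| := abs_sub _ _
    linarith

lemma ds_spec (i D A k₀ Δm : ℤ) (hA : 0 < A) :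
    (ds i D A k₀ Δm).2 = (ds i D A k₀ Δm).1 * A - i * D + Δm ∧
    2 * |(ds i D A k₀ Δm).2| ≤ A := by
  unfold ds
  set Δ₀ := k₀ * A - i * D + Δm with hd
  by_cases h1 : Δ₀ = 0
  · simp only [h1, if_pos rfl]
    constructor
    · simpa using h1.symm
    · simpa using hA.le
  · by_cases h2 : 0 < Δ₀
    · have hmod : 0 ≤ Δ₀ % A := Int.emod_nonneg _ hA.ne'
      have hlt : Δ₀ % A < A := Int.emod_lt_of_pos _ hA
      have hde : A * (Δ₀ / A) + Δ₀ % A = Δ₀ := Int.mul_ediv_add_emod _ _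
      have habs1 : |Δ₀ % A| = Δ₀ % A := abs_of_nonneg hmod
      have habs2 : |Δ₀ % A - A| = A - Δ₀ % A := by
        rw [abs_of_nonpos (by linarith)]; ring
      simp only [if_neg h1, if_pos h2]
      by_cases h3 : |Δ₀ % A - A| < |Δ₀ % A|
      · simp only [if_pos h3]
        refine ⟨by linear_combination hd + hde, ?_⟩
        rw [habs2] at *; linarith [h3, habs1 ▸ h3]
      · simp only [if_neg h3]
        refine ⟨by linear_combination hd + hde, ?_⟩
        push_neg at h3
        rw [habs1]; rw [habs1, habs2] at h3; linarith
    · have hneg : Δ₀ < 0 := by omega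
      have habs0 : |Δ₀| = -Δ₀ := abs_of_neg hneg
      have hmod : 0 ≤ |Δ₀| % A := Int.emod_nonneg _ hA.ne'
      have hlt : |Δ₀| % A < A := Int.emod_lt_of_pos _ hA
      have hde : A * (|Δ₀| / A) + |Δ₀| % A = |Δ₀| := Int.mul_ediv_add_emod _ _
      have habs1 : |(-(|Δ₀| % A))| = |Δ₀| % A := by
        rw [abs_neg, abs_of_nonneg hmod]
      have habs2 : |(-(|Δ₀| % A) + A)| = A - |Δ₀| % A := by
        rw [abs_of_nonneg (by linarith)]; ring
      simp only [if_neg h1, if_neg h2]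
      by_cases h3 : |(-(|Δ₀| % A) + A)| < |(-(|Δ₀| % A))|
      · simp only [if_pos h3]
        refine ⟨by linear_combination hd - hde - habs0, ?_⟩
        rw [habs1, habs2] at h3; rw [habs2]; linarith
      · simp only [if_neg h3]
        push_neg at h3
        refine ⟨by linear_combination hd - hde - habs0, ?_⟩
        rw [habs1]; rw [habs1, habs2] at h3; linarith

theorem stmt_10 (i₁ i₂ D A : ℤ) (hi₁ : 0 ≤ i₁) (hi₂ : 0 ≤ i₂) (hD : 0 ≤ D) (hA : 0 < A)
    (j₁ Δ₁ : ℤ) (hmin₁ : ∀ k : ℤ, |j₁ * A - i₁ * D| ≤ |k * A - i₁ * D|)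
    (hΔ₁ : Δ₁ = j₁ * A - i₁ * D) (κ₂ : ℤ) :
    (∀ k : ℤ, |(j₁ + (ds i₂ D A κ₂ Δ₁).1) * A - (i₁ + i₂) * D| ≤ |k * A - (i₁ + i₂) * D|) ∧
    (ds i₂ D A κ₂ Δ₁).2 = (j₁ + (ds i₂ D A κ₂ Δ₁).1) * A - (i₁ + i₂) * D := by
  obtain ⟨hres, hsmall⟩ := ds_spec i₂ D A κ₂ Δ₁ hA
  set j := (ds i₂ D A κ₂ Δ₁).1
  set Δ := (ds i₂ D A κ₂ Δ₁).2
  have hL : (j₁ + j) * A - (i₁ + i₂) * D = Δ := by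
    rw [hres, hΔ₁]; ring
  refine ⟨fun k => ?_, by rw [hL]⟩
  rw [hL]
  exact key A Δ _ hA hsmall ⟨k - j₁ - j, by linear_combination hL⟩
end
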